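/- Suppose two models are trained by the greedy training process on the same cumulative dataset T_{1:j}, both starting from the same learned set L and with no memorized data, possibly breaking ties between equally frequent features differently. If u_{c,i} denotes the i-th feature of class c learned by the first model (with u_{c,i} = NA if learning within class c has stopped before the i-th step) and u'_{c,i} that of the second model, then u_{c,i} = u'_{c,i} for every class c and every index i; in particular, the per-class order in which features are learned is deterministic. -/

import Mathlib

open Finset

/-- Number of data points in `N` whose feature set contains the feature `v`. -/
def featCount {F X : Type} [DecidableEq F] (feats : X → Finset F)
    (N : Finset X) (v : F) : ℕ :=
  (N.filter fun x => v ∈ feats x).card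

/-- `g(v; T, N)`: the frequency of feature `v` among the data points of `N`,
normalized by the size of the full training set `T`. -/
noncomputable def gval {F X : Type} [DecidableEq F] (feats : X → Finset F)
    (T N : Finset X) (v : F) : ℝ :=
  (featCount feats N v : ℝ) / (T.card : ℝ)

/-- The set of data points of `T` with nonzero gradient: not memorized (not in
`M`) and not well-classified by the learned set `L` (fewer than `τ` of their
features are learned). -/
def active {F X : Type} [DecidableEq F] [DecidableEq X] (feats : X → Finset F) (τ : ℕ)
    (L : Finset F) (M T : Finset X) : Finset X :=
  (T \ M).filter fun x => ((feats x) ∩ L).card < τ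

/-- The learned set after the first `i` steps of a run `us` starting from `L0`. -/
def learnedAfter {F : Type} [DecidableEq F] (L0 : Finset F) (us : List F)
    (i : ℕ) : Finset F :=
  L0 ∪ (us.take i).toFinset

/-- `us` is a valid greedy training run on the dataset `T` with initially
memorized set `M`, starting from the learned set `L0`; `S` is the set of all
features, `τ` the well-classification threshold and `γ` the noise strength.
At every step the model picks a not-yet-learned feature of maximal frequency
`g` among the active (nonzero-gradient) data points; it is learned if its
frequency is at least `γ/|T|`, and at the end of the run every remaining
unlearned feature has frequency below `γ/|T|` (the remaining active points are
then memorized). -/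
structure IsRun {F X : Type} [DecidableEq F] [DecidableEq X] (S : Finset F)
    (feats : X → Finset F) (τ : ℕ) (γ : ℝ) (T M : Finset X)
    (L0 : Finset F) (us : List F) : Prop where
  mem : ∀ i (h : i < us.length), us.get ⟨i, h⟩ ∈ S \ learnedAfter L0 us i
  maximal : ∀ i (h : i < us.length), ∀ u ∈ S \ learnedAfter L0 us i,
    gval feats T (active feats τ (learnedAfter L0 us i) M T) u ≤
      gval feats T (active feats τ (learnedAfter L0 us i) M T) (us.get ⟨i, h⟩)
  threshold : ∀ i (h : i < us.length),
    γ / (T.card : ℝ) ≤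
      gval feats T (active feats τ (learnedAfter L0 us i) M T) (us.get ⟨i, h⟩)
  stopped : ∀ u ∈ S \ learnedAfter L0 us us.length,
    gval feats T (active feats τ (learnedAfter L0 us us.length) M T) u <
      γ / (T.card : ℝ)

/-- The memorized set after a run: the previously memorized points together
with all points that are still active (not well-classified) at the end of the
run. -/
def finalM {F X : Type} [DecidableEq F] [DecidableEq X] (feats : X → Finset F) (τ : ℕ)
    (T M : Finset X) (L0 : Finset F) (us : List F) : Finset X :=
  M ∪ active feats τ (L0 ∪ us.toFinset) M T

/-- The cumulative dataset `T_{1:j}`, the union of the first `j` chunks. -/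
def cumT {X : Type} [DecidableEq X] (chunk : ℕ → Finset X) (j : ℕ) : Finset X :=
  (Finset.Icc 1 j).biUnion chunk

/-- `h(v; L)`: the fraction of data points (of one chunk) containing `v` that
are not well-classified by the learned set `L`. -/
noncomputable def hval {F : Type} [DecidableEq F] (C : ℕ) (Sc : Fin C → Finset F)
    (nA : Fin C → Finset F → ℕ) (τ n : ℕ) (v : F) (L : Finset F) : ℝ :=
  (1 / (n : ℝ)) * ∑ c : Fin C, ∑ A ∈ (Sc c).powerset,
    (nA c A : ℝ) * (if v ∈ A ∧ (A ∩ L).card < τ then 1 else 0)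

/-- The test accuracy of a learned feature set `L`. -/
noncomputable def ACC {F : Type} [DecidableEq F] (C : ℕ) (Sc : Fin C → Finset F)
    (nA : Fin C → Finset F → ℕ) (τ n : ℕ) (L : Finset F) : ℝ :=
  1 - ((C : ℝ) - 1) / (C : ℝ) * ((1 / (n : ℝ)) *
    ∑ c : Fin C, ∑ A ∈ (Sc c).powerset,
      (nA c A : ℝ) * (if (A ∩ L).card < τ then 1 else 0))



lemma filter_index_spec {α : Type*} (p : α → Bool) :
    ∀ (l : List α) (i : ℕ) (hi : i < (l.filter p).length),
      ∃ k, ∃ hk : k < l.length,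
        l.get ⟨k, hk⟩ = (l.filter p).get ⟨i, hi⟩ ∧
        (l.take k).filter p = (l.filter p).take i := by
  intro l
  induction l with
  | nil => intro i hi; simp at hi
  | cons a tl ih =>
    intro i hi
    by_cases hpa : p a
    · cases i with
      | zero =>
        refine ⟨0, by simp, ?_, by simp⟩
        simp [List.filter_cons, hpa]
      | succ m =>
        have hm : m < (tl.filter p).length := by
          have : (a :: tl).filter p = a :: tl.filter p := by simp [List.filter_cons, hpa]
          rw [this] at hi
          simpa using hi
        obtain ⟨k, hk, h1, h2⟩ := ih m hm
        refine ⟨k + 1, Nat.succ_lt_succ hk, ?_, ?_⟩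
        · simp only [List.get_eq_getElem] at h1 ⊢
          simpa [List.filter_cons, hpa] using h1
        · simp [List.filter_cons, hpa, h2]
    · have hi' : i < (tl.filter p).length := by
        have : (a :: tl).filter p = tl.filter p := by simp [List.filter_cons, hpa]
        rw [this] at hi; exact hi
      obtain ⟨k, hk, h1, h2⟩ := ih i hi'
      refine ⟨k + 1, Nat.succ_lt_succ hk, ?_, ?_⟩
      · simp only [List.get_eq_getElem] at h1 ⊢
        simpa [List.filter_cons, hpa] using h1
      · simp [List.filter_cons, hpa, h2]

lemma hval_congr {F : Type} [DecidableEq F] {C : ℕ} (Sc : Fin C → Finset F)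
    (nA : Fin C → Finset F → ℕ) (τ n : ℕ)
    (hdisjS : ∀ c c', c ≠ c' → Disjoint (Sc c) (Sc c'))
    (c : Fin C) (v : F) (hv : v ∈ Sc c) (L L' : Finset F)
    (hLL : L ∩ Sc c = L' ∩ Sc c) :
    hval C Sc nA τ n v L = hval C Sc nA τ n v L' := by
  unfold hval
  congr 1
  refine Finset.sum_congr rfl fun c' _ => Finset.sum_congr rfl fun A hA => ?_
  rw [Finset.mem_powerset] at hA
  by_cases hcc : c' = c
  · subst hcc
    have h1 : A ∩ L = A ∩ L' := by
      ext a
      simp only [Finset.mem_inter]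
      refine and_congr_right fun haA => ?_
      have haS : a ∈ Sc c' := hA haA
      constructor
      · intro h
        have : a ∈ L' ∩ Sc c' := hLL ▸ Finset.mem_inter.mpr ⟨h, haS⟩
        exact (Finset.mem_inter.mp this).1
      · intro h
        have : a ∈ L ∩ Sc c' := hLL.symm ▸ Finset.mem_inter.mpr ⟨h, haS⟩
        exact (Finset.mem_inter.mp this).1
    rw [h1]
  · have hvA : v ∉ A := fun h => Finset.disjoint_left.mp (hdisjS c' c hcc) (hA h) hv
    simp [hvA]

lemma chunk_filter_card {F X : Type} [DecidableEq F] [DecidableEq X]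
    {C : ℕ} (Sc : Fin C → Finset F) (label : X → Fin C) (feats : X → Finset F)
    (nA : Fin C → Finset F → ℕ)
    (hfeats : ∀ x, feats x ⊆ Sc (label x))
    (s : Finset X)
    (hcount : ∀ c : Fin C, ∀ A ∈ (Sc c).powerset,
      (s.filter fun x => label x = c ∧ feats x = A).card = nA c A)
    (q : Finset F → Prop) [DecidablePred q] :
    (s.filter fun x => q (feats x)).card
      = ∑ c : Fin C, ∑ A ∈ (Sc c).powerset, nA c A * (if q A then 1 else 0) := by
  classical
  rw [Finset.card_filter]
  rw [← Finset.sum_fiberwise s label (fun x => if q (feats x) then 1 else 0)]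
  refine Finset.sum_congr rfl fun c _ => ?_
  rw [← Finset.sum_fiberwise_of_maps_to (g := feats) (t := (Sc c).powerset)
      (fun x hx => Finset.mem_powerset.mpr (by
        rw [Finset.mem_filter] at hx
        rw [← hx.2]
        exact hfeats x)) (fun x => if q (feats x) then 1 else 0)]
  refine Finset.sum_congr rfl fun A hA => ?_
  rw [Finset.filter_filter]
  have hsum : ∑ x ∈ s.filter (fun x => label x = c ∧ feats x = A),
      (if q (feats x) then 1 else 0)
      = ∑ _x ∈ s.filter (fun x => label x = c ∧ feats x = A), (if q A then 1 else 0) := by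
    refine Finset.sum_congr rfl fun x hx => ?_
    rw [(Finset.mem_filter.mp hx).2.2]
  rw [hsum, Finset.sum_const, smul_eq_mul, hcount c A hA]

lemma gval_eq_hval {F X : Type} [DecidableEq F] [DecidableEq X]
    {C : ℕ} {τ : ℕ} {n : ℕ} (Sc : Fin C → Finset F) (label : X → Fin C)
    (feats : X → Finset F) (nA : Fin C → Finset F → ℕ) (chunk : ℕ → Finset X)
    (hfeats : ∀ x, feats x ⊆ Sc (label x))
    (hchunkdisj : ∀ j j', j ≠ j' → Disjoint (chunk j) (chunk j'))
    (hchunkcard : ∀ l, 1 ≤ l → (chunk l).card = n)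
    (hcount : ∀ l, 1 ≤ l → ∀ c : Fin C, ∀ A ∈ (Sc c).powerset,
      ((chunk l).filter fun x => label x = c ∧ feats x = A).card = nA c A)
    (j : ℕ) (hj : 1 ≤ j) (L : Finset F) (v : F) :
    gval feats (cumT chunk j) (active feats τ L ∅ (cumT chunk j)) v
      = hval C Sc nA τ n v L := by
  classical
  have hTcard : (cumT chunk j).card = j * n := by
    rw [cumT, Finset.card_biUnion (fun l _ l' _ hne => hchunkdisj l l' hne)]
    rw [Finset.sum_congr rfl (fun l hl => hchunkcard l (Finset.mem_Icc.mp hl).1)]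
    simp [Nat.card_Icc]
  have hfc : featCount feats (active feats τ L ∅ (cumT chunk j)) v
      = j * ∑ c : Fin C, ∑ A ∈ (Sc c).powerset,
          nA c A * (if v ∈ A ∧ (A ∩ L).card < τ then 1 else 0) := by
    rw [featCount, active, Finset.sdiff_empty, Finset.filter_comm, Finset.filter_filter]
    rw [cumT, Finset.filter_biUnion]
    rw [Finset.card_biUnion (fun l _ l' _ hne =>
      Finset.disjoint_filter_filter (hchunkdisj l l' hne))]
    rw [Finset.sum_congr rfl (fun l hl => chunk_filter_card Sc label feats nA hfeats (chunk l)
        (hcount l (Finset.mem_Icc.mp hl).1) (fun A => v ∈ A ∧ (A ∩ L).card < τ))]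
    simp [Nat.card_Icc]
  have hj0 : (j : ℝ) ≠ 0 := Nat.cast_ne_zero.mpr (by omega)
  rw [gval, hfc, hTcard, hval]
  push_cast
  rw [mul_div_mul_left _ _ hj0, one_div, inv_mul_eq_div]

/-- Lemma: the per-class order of learned features is
deterministic. Two greedy training runs on the same cumulative dataset
`T_{1:j}`, starting from the same learned set `L0` and with no memorized data,
learn, within each class, exactly the same features in the same order
(`NA`, i.e. `none`, when learning in that class has stopped). -/
theorem learning_order_deterministic
    {F X : Type} [DecidableEq F] [DecidableEq X]
    (C K τ : ℕ) (γ : ℝ) (n : ℕ)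
    (Sc : Fin C → Finset F) (label : X → Fin C) (feats : X → Finset F)
    (nA : Fin C → Finset F → ℕ) (chunk : ℕ → Finset X)
    (hγ : 0 < γ) (hτK : τ < K)
    (hK : ∀ c, (Sc c).card = K)
    (hdisjS : ∀ c c', c ≠ c' → Disjoint (Sc c) (Sc c'))
    (hfeats : ∀ x, feats x ⊆ Sc (label x))
    (hnA : ∀ c, ∀ A ∈ (Sc c).powerset, 1 ≤ nA c A)
    (hn : n = ∑ c : Fin C, ∑ A ∈ (Sc c).powerset, nA c A)
    (hchunkdisj : ∀ j j', j ≠ j' → Disjoint (chunk j) (chunk j'))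
    (hchunkcard : ∀ j, 1 ≤ j → (chunk j).card = n)
    (hcount : ∀ j, 1 ≤ j → ∀ c : Fin C, ∀ A ∈ (Sc c).powerset,
      ((chunk j).filter fun x => label x = c ∧ feats x = A).card = nA c A)
    (hinj : ∀ L : Finset F, L ⊆ Finset.univ.biUnion Sc →
      ∀ c : Fin C, ∀ v₁ ∈ Sc c, ∀ v₂ ∈ Sc c,
        hval C Sc nA τ n v₁ L = hval C Sc nA τ n v₂ L → v₁ = v₂)
    (j : ℕ) (hj : 1 ≤ j)
    (L0 : Finset F) (hL0 : L0 ⊆ Finset.univ.biUnion Sc)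
    (us us' : List F)
    (hrun : IsRun (Finset.univ.biUnion Sc) feats τ γ (cumT chunk j) ∅ L0 us)
    (hrun' : IsRun (Finset.univ.biUnion Sc) feats τ γ (cumT chunk j) ∅ L0 us') :
    ∀ (c : Fin C) (i : ℕ),
      (us.filter fun v => decide (v ∈ Sc c))[i]? =
        (us'.filter fun v => decide (v ∈ Sc c))[i]? := by
  intro c i
  classical
  set S : Finset F := Finset.univ.biUnion Sc with hS
  set T : Finset X := cumT chunk j with hT
  set p : F → Bool := fun v => decide (v ∈ Sc c) with hp
  have ghl : ∀ (L : Finset F) (v : F),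
      gval feats T (active feats τ L ∅ T) v = hval C Sc nA τ n v L :=
    fun L v => gval_eq_hval Sc label feats nA chunk hfeats hchunkdisj hchunkcard hcount j hj L v
  -- membership in S
  have hmemS : ∀ u ∈ Sc c, u ∈ S := fun u hu => Finset.mem_biUnion.mpr ⟨c, Finset.mem_univ c, hu⟩
  -- intersection with Sc c only sees filtered part
  have interSc : ∀ l : List F, (L0 ∪ (l.filter p).toFinset) ∩ Sc c = (L0 ∪ l.toFinset) ∩ Sc c := by
    intro l
    ext a
    simp only [Finset.mem_inter, Finset.mem_union, List.mem_toFinset, List.mem_filter, hp,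
      decide_eq_true_eq]
    tauto
  -- elements of filtered list are in Sc c
  have hfiltSc : ∀ (l : List F) (a : F), a ∈ l.filter p → a ∈ Sc c := by
    intro l a ha
    have := (List.mem_filter.mp ha).2
    rw [hp] at this
    exact of_decide_eq_true this
  -- spec 1: per-step spec for the filtered list of a run
  have spec1 : ∀ (vs : List F), IsRun S feats τ γ T ∅ L0 vs →
      ∀ i' (hi : i' < (vs.filter p).length),
        (vs.filter p).get ⟨i', hi⟩ ∈ Sc c ∧
        (vs.filter p).get ⟨i', hi⟩ ∉ L0 ∪ ((vs.filter p).take i').toFinset ∧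
        γ / ((T.card : ℝ)) ≤ hval C Sc nA τ n ((vs.filter p).get ⟨i', hi⟩)
          (L0 ∪ ((vs.filter p).take i').toFinset) ∧
        ∀ u, u ∈ Sc c → u ∉ L0 ∪ ((vs.filter p).take i').toFinset →
          hval C Sc nA τ n u (L0 ∪ ((vs.filter p).take i').toFinset) ≤
          hval C Sc nA τ n ((vs.filter p).get ⟨i', hi⟩)
            (L0 ∪ ((vs.filter p).take i').toFinset) := by
    intro vs hvs i' hi
    obtain ⟨k, hk, hget, htk⟩ := filter_index_spec p vs i' hi
    have hwSc : (vs.filter p).get ⟨i', hi⟩ ∈ Sc c :=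
      hfiltSc vs _ (List.get_mem _ _)
    have hMiLA : (L0 ∪ ((vs.filter p).take i').toFinset) ∩ Sc c
        = (learnedAfter L0 vs k) ∩ Sc c := by
      rw [← htk, learnedAfter]
      exact interSc (vs.take k)
    have hsub : L0 ∪ ((vs.filter p).take i').toFinset ⊆ learnedAfter L0 vs k := by
      rw [← htk, learnedAfter]
      refine Finset.union_subset_union (le_refl _) ?_
      rw [List.toFinset_filter]
      exact Finset.filter_subset _ _
    have hmem := hvs.mem k hk
    rw [hget] at hmem
    have hwNot : (vs.filter p).get ⟨i', hi⟩ ∉ L0 ∪ ((vs.filter p).take i').toFinset :=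
      fun h => (Finset.mem_sdiff.mp hmem).2 (hsub h)
    have hnotLA : ∀ u, u ∈ Sc c → u ∉ L0 ∪ ((vs.filter p).take i').toFinset →
        u ∉ learnedAfter L0 vs k := by
      intro u huSc huMi hLA
      exact huMi (Finset.mem_of_mem_inter_left
        (hMiLA ▸ Finset.mem_inter.mpr ⟨hLA, huSc⟩))
    refine ⟨hwSc, hwNot, ?_, ?_⟩
    · have hth := hvs.threshold k hk
      rw [hget, ghl] at hth
      rwa [hval_congr Sc nA τ n hdisjS c _ hwSc _ _ hMiLA] 
    · intro u huSc huMi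
      have hmax := hvs.maximal k hk u
        (Finset.mem_sdiff.mpr ⟨hmemS u huSc, hnotLA u huSc huMi⟩)
      rw [hget, ghl, ghl] at hmax
      rw [hval_congr Sc nA τ n hdisjS c _ huSc _ _ hMiLA,
        hval_congr Sc nA τ n hdisjS c _ hwSc _ _ hMiLA]
      exact hmax
  -- spec 2: stopping spec
  have spec2 : ∀ (vs : List F), IsRun S feats τ γ T ∅ L0 vs →
      ∀ u, u ∈ Sc c → u ∉ L0 ∪ (vs.filter p).toFinset →
        hval C Sc nA τ n u (L0 ∪ (vs.filter p).toFinset) < γ / ((T.card : ℝ)) := by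
    intro vs hvs u huSc huM
    have hMeLA : (L0 ∪ (vs.filter p).toFinset) ∩ Sc c
        = (learnedAfter L0 vs vs.length) ∩ Sc c := by
      rw [learnedAfter, List.take_length]
      exact interSc vs
    have huLA : u ∉ learnedAfter L0 vs vs.length := by
      intro hLA
      exact huM (Finset.mem_of_mem_inter_left
        (hMeLA ▸ Finset.mem_inter.mpr ⟨hLA, huSc⟩))
    have hst := hvs.stopped u (Finset.mem_sdiff.mpr ⟨hmemS u huSc, huLA⟩)
    rw [ghl] at hst
    rwa [hval_congr Sc nA τ n hdisjS c _ huSc _ _ hMeLA]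
  -- prefixes of filtered lists are subsets of S together with L0
  have hsubS : ∀ (vs : List F) (m : ℕ),
      L0 ∪ ((vs.filter p).take m).toFinset ⊆ S := by
    intro vs m
    refine Finset.union_subset hL0 ?_
    intro a ha
    rw [List.mem_toFinset] at ha
    exact hmemS a (hfiltSc vs a ((List.take_prefix m (vs.filter p)).subset ha))
  -- main induction: prefixes of the two filtered lists agree
  have htake : ∀ m, (us.filter p).take m = (us'.filter p).take m := by
    intro m
    induction m with
    | zero => simp
    | succ m ih =>
      by_cases h1 : m < (us.filter p).length
      · by_cases h2 : m < (us'.filter p).length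
        · obtain ⟨ha1, ha2, ha3, ha4⟩ := spec1 us hrun m h1
          obtain ⟨hb1, hb2, hb3, hb4⟩ := spec1 us' hrun' m h2
          rw [← ih] at hb2 hb4
          have hle1 : hval C Sc nA τ n ((us'.filter p).get ⟨m, h2⟩)
              (L0 ∪ ((us.filter p).take m).toFinset) ≤
              hval C Sc nA τ n ((us.filter p).get ⟨m, h1⟩)
              (L0 ∪ ((us.filter p).take m).toFinset) := ha4 _ hb1 hb2
          have hle2 : hval C Sc nA τ n ((us.filter p).get ⟨m, h1⟩)
              (L0 ∪ ((us.filter p).take m).toFinset) ≤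
              hval C Sc nA τ n ((us'.filter p).get ⟨m, h2⟩)
              (L0 ∪ ((us.filter p).take m).toFinset) := hb4 _ ha1 ha2
          have heq : (us.filter p).get ⟨m, h1⟩ = (us'.filter p).get ⟨m, h2⟩ :=
            hinj _ (hsubS us m) c _ ha1 _ hb1 (le_antisymm hle2 hle1)
          rw [List.take_succ, List.take_succ, ih,
            List.getElem?_eq_getElem h1, List.getElem?_eq_getElem h2]
          simp only [List.get_eq_getElem] at heq
          rw [heq]
        · exfalso
          obtain ⟨ha1, ha2, ha3, _⟩ := spec1 us hrun m h1
          have hws' : (us'.filter p).take m = us'.filter p :=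
            List.take_of_length_le (Nat.le_of_not_lt h2)
          rw [ih, hws'] at ha2 ha3
          have hstop := spec2 us' hrun' _ ha1 ha2
          linarith
      · by_cases h2 : m < (us'.filter p).length
        · exfalso
          obtain ⟨hb1, hb2, hb3, _⟩ := spec1 us' hrun' m h2
          have hws : (us.filter p).take m = us.filter p :=
            List.take_of_length_le (Nat.le_of_not_lt h1)
          rw [← ih, hws] at hb2 hb3
          have hstop := spec2 us hrun _ hb1 hb2
          linarith
        · rw [List.take_of_length_le (le_trans (Nat.le_of_not_lt h1) (Nat.le_succ m)),
            List.take_of_length_le (le_trans (Nat.le_of_not_lt h2) (Nat.le_succ m))]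
          rw [List.take_of_length_le (Nat.le_of_not_lt h1),
            List.take_of_length_le (Nat.le_of_not_lt h2)] at ih
          exact ih
  have hfin := htake ((us.filter p).length ⊔ (us'.filter p).length)
  rw [List.take_of_length_le (le_max_left _ _),
    List.take_of_length_le (le_max_right _ _)] at hfin
  rw [hfin]
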